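/- Let x, y, z be complex numbers of absolute value 1 such that the three numbers (2 + x + ȳ)(2 + x + z̄)(1 + 2x̄ + yz), (2 + y + z̄)(2 + y + x̄)(1 + 2ȳ + zx), and (2 + z + x̄)(2 + z + ȳ)(1 + 2z̄ + xy) are all real. Then two of x, y, z must be equal (x = y or y = z or x = z). -/

import Mathlib

open Complex ComplexConjugate

set_option maxHeartbeats 1000000 in
/-- If `x, y, z` are unit complex numbers such that the three
products `(2+x+ȳ)(2+x+z̄)(1+2x̄+yz)`, `(2+y+z̄)(2+y+x̄)(1+2ȳ+zx)` and
`(2+z+x̄)(2+z+ȳ)(1+2z̄+xy)` are all real, then two of `x, y, z` are equal. -/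
theorem two_equal_of_three_real_products (x y z : ℂ)
    (hx : ‖x‖ = 1) (hy : ‖y‖ = 1) (hz : ‖z‖ = 1)
    (h1 : ((2 + x + conj y) * (2 + x + conj z) * (1 + 2 * conj x + y * z)).im = 0)
    (h2 : ((2 + y + conj z) * (2 + y + conj x) * (1 + 2 * conj y + z * x)).im = 0)
    (h3 : ((2 + z + conj x) * (2 + z + conj y) * (1 + 2 * conj z + x * y)).im = 0) :
    x = y ∨ y = z ∨ x = z := by
  have hxa : x * conj x = 1 := by
    rw [Complex.mul_conj, Complex.normSq_eq_norm_sq, hx]; norm_num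
  have hya : y * conj y = 1 := by
    rw [Complex.mul_conj, Complex.normSq_eq_norm_sq, hy]; norm_num
  have hza : z * conj z = 1 := by
    rw [Complex.mul_conj, Complex.normSq_eq_norm_sq, hz]; norm_num
  have hc1 := Complex.conj_eq_iff_im.mpr h1
  have hc2 := Complex.conj_eq_iff_im.mpr h2
  have hc3 := Complex.conj_eq_iff_im.mpr h3
  simp only [map_mul, map_add, map_one, map_ofNat, Complex.conj_conj] at hc1 hc2 hc3
  have e1 : x * ((2*y+x*y+1) * (2*z+x*z+1) * (x+2+x*y*z)) = (2*x+1+x*y) * (2*x+1+x*z) * (y*z+2*x*y*z+1) := by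
    linear_combination (-(x^2*y*z)) * hc1 + (1*y*z + 1*y*z*(conj y)*(conj z) - 2*x*y*z - 4*x*y*z*(conj z) - 4*x*y*z*(conj y) + 2*x*y*z*(conj y)*(conj z) + 1*x*y*z*(conj x) + 1*x*y*z*(conj x)*(conj y)*(conj z) + 1*x*y*z^2 + 1*x*y*z^2*(conj y)*(conj z) + 1*x*y^2*z + 1*x*y^2*z*(conj y)*(conj z) - 2*x^2*y*z*(conj z) - 2*x^2*y*z*(conj y) + 2*x^2*y*z*(conj x) + 2*x^2*y*z^2 + 2*x^2*y^2*z - 2*x^3*y*z) * hxa + (1*z*(conj z) - 4*x*z + 2*x*z*(conj z) + 1*x*z^2*(conj z) + 1*x*y*z*(conj z) - 4*x^2*z + 3*x^2*z*(conj z) + 2*x^2*z^2*(conj z) + 2*x^2*y*z*(conj z) - 2*x^2*y*z^2 - 1*x^3*z - 1*x^3*y*z^2) * hya + (1 + 2*x + 1*x*z - 3*x*y + 3*x^2 + 2*x^2*z - 2*x^2*y - 2*x^2*y^2*z - 1*x^3*y - 1*x^3*y^2*z) * hza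
  have e2 : y * ((2*z+y*z+1) * (2*x+y*x+1) * (y+2+y*z*x)) = (2*y+1+y*z) * (2*y+1+y*x) * (z*x+2*y*z*x+1) := by
    linear_combination (-(y^2*z*x)) * hc2 + (-2*y^2*z + 3*y^2*z*(conj z) - 4*y^2*z*(conj y) + 2*y^2*z*(conj y)*(conj z) + 1*y^2*z*(conj y)^2*(conj z) + 2*y^2*z^2*(conj z) + 1*y^2*z^2*(conj y)*(conj z) - 1*y^3*z - 2*y^3*z*(conj y) + 2*x*y^2*z*(conj z) + 1*x*y^2*z*(conj y)*(conj z) - 2*x*y^2*z^2 - 1*x*y^3*z^2) * hxa + (1*z*(conj z) - 4*y*z + 2*y*z*(conj z) + 1*y*z*(conj y)*(conj z) + 1*y*z^2*(conj z) - 2*y^2*z + 1*x*z - 2*x*y*z - 3*x*y*z*(conj z) + 1*x*y*z*(conj y) + 1*x*y*z^2 - 2*x*y^2*z*(conj z) + 2*x*y^2*z*(conj y) + 2*x*y^2*z^2 - 2*x*y^3*z + 1*x^2*y*z + 2*x^2*y^2*z) * hya + (1 + 2*y + 1*y*z + 3*y^2 + 2*y^2*z - 3*x*y - 2*x*y^2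 - 1*x*y^3 - 2*x^2*y^2*z - 1*x^2*y^3*z) * hza
  have e3 : z * ((2*x+z*x+1) * (2*y+z*y+1) * (z+2+z*x*y)) = (2*z+1+z*x) * (2*z+1+z*y) * (x*y+2*z*x*y+1) := by
    linear_combination (-(z^2*x*y)) * hc3 + (-2*y*z^2 - 4*y*z^2*(conj z) + 3*y*z^2*(conj y) + 2*y*z^2*(conj y)*(conj z) + 1*y*z^2*(conj y)*(conj z)^2 - 1*y*z^3 - 2*y*z^3*(conj z) + 2*y^2*z^2*(conj y) + 1*y^2*z^2*(conj y)*(conj z) + 2*x*y*z^2*(conj y) + 1*x*y*z^2*(conj y)*(conj z) - 2*x*y^2*z^2 - 1*x*y^2*z^3) * hxa + (3*z^2 + 2*z^2*(conj z) + 1*z^2*(conj z)^2 + 2*y*z^2 + 1*y*z^2*(conj z) - 3*x*z^2*(conj z) - 1*x*z^3 - 2*x*z^3*(conj z) - 2*x^2*y*z^2 - 1*x^2*y*z^3) * hya + (1 + 2*z + 1*z*(conj z) - 3*y*z - 2*y*z^2 - 3*x*z - 2*x*z^2 + 1*x*y - 2*x*y*z + 1*x*y*z*(conj z) + 2*x*y*z^2*(conj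 z) - 2*x*y*z^3 + 1*x*y^2*z + 2*x*y^2*z^2 + 1*x^2*y*z + 2*x^2*y*z^2) * hza
  have key : ((x - y) * (y - z) * (x - z))^2 = 0 := by
    linear_combination ((7/24) + (7/24)*z + (17/24)*z^2 + (1/6)*z^3 + (5/12)*z^4 + (1/4)*y - (4/3)*y*z - (1/4)*y*z^2 - (5/3)*y*z^3 - (11/12)*y*z^4 + (5/12)*y*z^5 + (1/12)*y^2 - (4/3)*y^2*z + (19/12)*y^2*z^2 + (2/3)*y^2*z^3 - (43/24)*y^2*z^4 + (5/12)*y^2*z^5 - (1/12)*y^3 - (13/24)*y^3*z + (29/24)*y^3*z^2 + (55/24)*y^3*z^3 - (1/24)*y^3*z^4 + (5/12)*y^3*z^5 - (11/24)*y^4*z^2 - (3/8)*y^4*z^3 - (5/12)*y^4*z^4 + (1/24)*x - (1/4)*x*z - (1/24)*x*z^2 + (5/24)*x*y - (3/8)*x*y*z + (1/8)*x*y*z^2 + (7/12)*x*y*z^3 - (1/6)*x*y*z^4 + (5/24)*x*y^2 + (1/4)*x*y^2*z + (1/8)*x*y^2*z^2 + (1/4)*x*y^2*z^3 - (5/24)*x*y^2*z^4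 + (1/12)*x*y^3 + (5/12)*x*y^3*z + (1/24)*x*y^3*z^2 - (5/8)*x*y^3*z^3 - (7/24)*x*y^3*z^4 - (1/12)*x*y^4*z - (1/8)*x*y^4*z^2 - (1/6)*x*y^4*z^3 - (1/24)*x^2*z^2 + (1/24)*x^2*z^3 - (1/24)*x^2*y - (1/8)*x^2*y*z - (5/24)*x^2*y*z^2 + (7/24)*x^2*y*z^3 - (1/24)*x^2*y*z^4 - (1/12)*x^2*y^2 - (1/6)*x^2*y^2*z - (7/24)*x^2*y^2*z^2 + (7/24)*x^2*y^2*z^3 + (1/12)*x^2*y^3*z + (1/8)*x^2*y^3*z^2 + (1/6)*x^2*y^3*z^3) * e1 + (-(13/24) - (23/24)*z - (11/8)*z^2 + (1/6)*z^3 + (5/6)*z^4 + (1/24)*y + (11/6)*y*z + (13/8)*y*z^2 + (5/12)*y*z^3 - (5/12)*y*z^4 - (11/24)*y^2*z^2 - (3/8)*y^2*z^3 - (5/12)*y^2*z^4 - (1/6)*x + (7/6)*x*z + (1/6)*x*z^2 - (5/4)*x*z^3 + (1/3)*x*z^4 - (5/24)*x*y + (31/24)*x*y*z - (7/24)*x*y*z^2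 - (13/12)*x*y*z^3 - (1/6)*x*y*z^4 - (5/12)*x*y*z^5 - (1/24)*x*y^2 - (13/24)*x*y^2*z - (35/24)*x*y^2*z^2 + (7/24)*x*y^2*z^3 + (29/24)*x*y^2*z^4 + (5/12)*x*y^2*z^5 - (1/3)*x^2 - (1/12)*x^2*z + (19/12)*x^2*z^2 + (2/3)*x^2*z^3 + (7/24)*x^2*z^4 + (5/24)*x^2*y + (1/4)*x^2*y*z - (9/8)*x^2*y*z^2 - (11/6)*x^2*y*z^3 - (5/24)*x^2*y*z^4 - (5/12)*x^2*y*z^5 - (1/12)*x^2*y^2 - (1/6)*x^2*y^2*z + (1/8)*x^2*y^2*z^2 + (17/24)*x^2*y^2*z^3 + (5/12)*x^2*y^2*z^4 - (1/12)*x^3 - (13/24)*x^3*z - (1/24)*x^3*z^2 + (5/24)*x^3*z^3 - (1/24)*x^3*z^4 + (1/12)*x^3*y + (5/12)*x^3*y*z + (11/24)*x^3*y*z^2 - (5/24)*x^3*y*z^3 + (1/8)*x^3*y*z^4 + (1/12)*x^3*y^2*z + (1/8)*x^3*y^2*z^2 + (1/6)*x^3*y^2*z^3 - (1/24)*x^4*z^2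 + (1/24)*x^4*z^3 - (1/12)*x^4*y*z - (1/8)*x^4*y*z^2 - (1/6)*x^4*y*z^3) * e2 + ((1/4) + (1/6)*z - (5/12)*z^2 + (19/24)*y - (4/3)*y*z - (1/2)*y*z^2 + (5/12)*y*z^3 + (35/24)*y^2 - (29/24)*y^2*z + (7/24)*y^2*z^2 + (5/12)*y^2*z^3 - (1/24)*y^3 - (25/24)*y^3*z + (3/8)*y^3*z^2 + (5/12)*y^3*z^3 - (11/24)*x + (19/12)*x*z - (1/2)*x*z^2 - (7/6)*x*y + (3/4)*x*y*z - (2/3)*x*y*z^2 + (5/12)*x*y*z^3 - (5/12)*x*y^2 + (5/24)*x*y^2*z + (11/12)*x*y^2*z^2 - (5/4)*x*y^2*z^3 - (7/8)*x*y^3 + (1/8)*x*y^3*z + (23/8)*x*y^3*z^2 - (5/4)*x*y^3*z^3 - (1/24)*x*y^4 - (3/8)*x*y^4*z + (11/24)*x*y^4*z^2 - (5/12)*x*y^4*z^3 - (5/8)*x^2 + (11/24)*x^2*z - (1/8)*x^2*z^2 + (5/8)*x^2*y*z - (3/4)*x^2*y*z^2 + (5/6)*x^2*y*z^3 + (17/12)*x^2*y^2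 - (1/4)*x^2*y^2*z - (25/12)*x^2*y^2*z^2 + (5/12)*x^2*y^2*z^3 + (1/8)*x^2*y^3 + (1/24)*x^2*y^3*z - (1/12)*x^2*y^4 - (1/24)*x^3 + (5/24)*x^3*z - (1/24)*x^3*z^2 - (11/24)*x^3*y + (1/8)*x^3*y*z - (1/24)*x^3*y*z^2 + (1/8)*x^3*y^2 + (1/24)*x^3*y^2*z + (1/6)*x^3*y^3 - (1/6)*x^3*y^3*z + (1/6)*x^3*y^3*z^2 - (1/24)*x^4*y + (1/24)*x^4*y*z + (1/24)*x^4*y*z^2 - (1/12)*x^4*y^2) * e3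
  have hD : (x - y) * (y - z) * (x - z) = 0 := by
    have := pow_eq_zero_iff (n := 2) (by norm_num) |>.mp key
    exact this
  rcases mul_eq_zero.mp hD with h | h
  · rcases mul_eq_zero.mp h with h' | h'
    · exact Or.inl (sub_eq_zero.mp h')
    · exact Or.inr (Or.inl (sub_eq_zero.mp h'))
  · exact Or.inr (Or.inr (sub_eq_zero.mp h))
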